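/- Let f : X → Y be a co-uniformly continuous map from a metric space X to a metrically convex metric space Y. Then there exist constants K > 0 and C > 0 such that for all x ∈ X and all r > 0, B_Y(f(x), r) ⊆ (f(B_X(x, Cr)))^K, where A^K denotes the union of closed K-balls centered at points of A. -/

import Mathlib

/-- A metric space is metrically convex if between any two points there are points
realizing every convex combination of the distance. -/
def MetricallyConvex (Y : Type*) [MetricSpace Y] : Prop :=
  ∀ y₀ y₁ : Y, ∀ lam : ℝ, 0 < lam → lam < 1 →
    ∃ yl : Y, dist y₀ yl = lam * dist y₀ y₁ ∧ dist y₁ yl = (1 - lam) * dist y₀ y₁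

lemma chain_lemma {X Y : Type*} [MetricSpace X] [MetricSpace Y] (f : X → Y)
    (hconv : MetricallyConvex Y) {δ : ℝ} (hδ : 0 < δ)
    (h1 : ∀ x : X, Metric.closedBall (f x) δ ⊆ f '' Metric.closedBall x 1) :
    ∀ n : ℕ, ∀ x : X,
      Metric.closedBall (f x) (n * δ) ⊆ f '' Metric.closedBall x n := by
  intro n
  induction n with
  | zero =>
    intro x y hy
    simp only [Nat.cast_zero, zero_mul, Metric.mem_closedBall] at hy
    have : y = f x := by
      have := dist_nonneg (x := y) (y := f x)
      have : dist y (f x) = 0 := le_antisymm hy this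
      exact dist_eq_zero.mp this
    exact ⟨x, by simp, this.symm⟩
  | succ n ih =>
    intro x y hy
    simp only [Metric.mem_closedBall] at hy
    by_cases hcase : dist (f x) y ≤ δ
    · obtain ⟨x', hx', hfx'⟩ := h1 x (by simpa [Metric.mem_closedBall, dist_comm] using hcase)
      refine ⟨x', ?_, hfx'⟩
      simp only [Metric.mem_closedBall] at hx' ⊢
      calc dist x' x ≤ 1 := hx'
        _ ≤ (n + 1 : ℕ) := by exact_mod_cast Nat.one_le_iff_ne_zero.mpr (Nat.succ_ne_zero n)
    · push_neg at hcase
      set D := dist (f x) y with hD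
      have hDpos : 0 < D := lt_trans hδ hcase
      have hlam0 : 0 < δ / D := div_pos hδ hDpos
      have hlam1 : δ / D < 1 := (div_lt_one hDpos).mpr hcase
      obtain ⟨y', hy'1, hy'2⟩ := hconv (f x) y (δ / D) hlam0 hlam1
      have hy'1' : dist (f x) y' = δ := by
        rw [hy'1]; field_simp; exact hD.symm
      have hy'2' : dist y y' ≤ n * δ := by
        rw [hy'2]
        have : (1 - δ / D) * D = D - δ := by field_simp
        rw [this]
        have hyD : D ≤ ((n : ℝ) + 1) * δ := by
          rw [dist_comm] at hy; push_cast at hy; linarith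
        linarith
      obtain ⟨x', hx', hfx'⟩ := h1 x (by simpa [Metric.mem_closedBall, dist_comm] using hy'1'.le)
      have hyball : y ∈ Metric.closedBall (f x') ((n : ℕ) * δ) := by
        simp only [Metric.mem_closedBall, hfx']
        linarith [dist_comm y y' ▸ hy'2', hy'2']
      obtain ⟨x'', hx'', hfx''⟩ := ih x' hyball
      refine ⟨x'', ?_, hfx''⟩
      simp only [Metric.mem_closedBall] at hx' hx'' ⊢
      calc dist x'' x ≤ dist x'' x' + dist x' x := dist_triangle _ _ _
        _ ≤ n + 1 := add_le_add hx'' hx'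
        _ = ((n + 1 : ℕ) : ℝ) := by push_cast; ring

theorem coUniformlyContinuous_coLipschitz_with_error
    {X Y : Type*} [MetricSpace X] [MetricSpace Y] (f : X → Y)
    (hconv : MetricallyConvex Y)
    (hf : ∀ d : ℝ, 0 < d → ∃ δ : ℝ, 0 < δ ∧ ∀ x : X,
      Metric.closedBall (f x) δ ⊆ f '' Metric.closedBall x d) :
    ∃ K C : ℝ, 0 < K ∧ 0 < C ∧ ∀ x : X, ∀ r : ℝ, 0 < r →
      Metric.closedBall (f x) r ⊆
        ⋃ a ∈ f '' Metric.closedBall x (C * r), Metric.closedBall a K := by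
  obtain ⟨δ, hδ, h1⟩ := hf 1 one_pos
  refine ⟨δ, 2 / δ, hδ, by positivity, ?_⟩
  intro x r hr y hy
  simp only [Metric.mem_closedBall] at hy
  have hCr : 0 < 2 / δ * r := by positivity
  by_cases hcase : r ≤ δ
  · -- y is within δ of f x, and f x is in the image
    refine Set.mem_iUnion₂.mpr ⟨f x, ⟨x, ?_, rfl⟩, ?_⟩
    · simp only [Metric.mem_closedBall, dist_self]; linarith
    · simp only [Metric.mem_closedBall]; linarith
  · push_neg at hcase
    set n : ℕ := ⌈r / δ⌉₊ with hn
    have hrn : r ≤ n * δ := by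
      have : r / δ ≤ n := Nat.le_ceil _
      calc r = r / δ * δ := by field_simp
        _ ≤ n * δ := by apply mul_le_mul_of_nonneg_right this hδ.le
    have hyn : y ∈ Metric.closedBall (f x) ((n : ℕ) * δ) := by
      simp only [Metric.mem_closedBall]; linarith
    obtain ⟨x', hx', hfx'⟩ := chain_lemma f hconv hδ h1 n x hyn
    refine Set.mem_iUnion₂.mpr ⟨y, ⟨x', ?_, hfx'⟩, ?_⟩
    · simp only [Metric.mem_closedBall] at hx' ⊢
      have hceil : (n : ℝ) ≤ r / δ + 1 := le_of_lt (Nat.ceil_lt_add_one (by positivity))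
      have h1le : 1 ≤ r / δ := (le_div_iff₀ hδ).mpr (by linarith)
      have : (n : ℝ) ≤ 2 / δ * r := by
        calc (n : ℝ) ≤ r / δ + 1 := hceil
          _ ≤ r / δ + r / δ := by linarith
          _ = 2 / δ * r := by ring
      linarith [hx']
    · simp [Metric.mem_closedBall, hδ.le]
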